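/- For every graph G and all positive integers r, k, a, one has σ(G, a·r, a·k) ≤ a·σ(G, r, k). -/

import Mathlib

/-- One simultaneous move in the game: each agent stays put or moves along an edge. -/
def RSMove {V : Type*} (G : SimpleGraph V) {ι : Type*} (p q : ι → V) : Prop :=
  ∀ i, q i = p i ∨ G.Adj (p i) (q i)

/-- The spies have a winning strategy in 𝒢(G,r,s,k): there is a causal function `f`
(depending only on the history so far) producing the spies' positions at the end of each
round from the revolutionaries' positions up to that round (the revolutionaries
place/move first in each round), such that against every legal play of the
revolutionaries the spies' play is legal and, at the end of every round, each vertex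
holding at least `k` revolutionaries is occupied by a spy. -/
def SpiesWin {V : Type*} (G : SimpleGraph V) (r s k : ℕ) : Prop :=
  ∃ f : (ℕ → Fin r → V) → ℕ → Fin s → V,
    (∀ R R' n, (∀ m, m ≤ n → R m = R' m) → f R n = f R' n) ∧
    ∀ R : ℕ → Fin r → V, (∀ n, RSMove G (R n) (R (n + 1))) →
      (∀ n, RSMove G (f R n) (f R (n + 1))) ∧
      (∀ n v, k ≤ Set.ncard {i | R n i = v} → ∃ j, f R n j = v)

/-- σ(G, r, k): the minimum number of spies needed to win 𝒢(G,r,s,k). -/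
noncomputable def spySigma {V : Type*} (G : SimpleGraph V) (r k : ℕ) : ℕ :=
  sInf {s | SpiesWin G r s k}

/-- With `r` spies, each spy can simply shadow one revolutionary. -/
lemma spiesWin_copy {V : Type*} (G : SimpleGraph V) (r k : ℕ) (hk : 0 < k) :
    SpiesWin G r r k := by
  refine ⟨fun R n i => R n i, ?_, ?_⟩
  · intro R R' n h
    exact h n le_rfl
  · intro R hR
    refine ⟨hR, ?_⟩
    intro n v hv
    have hne : {i | R n i = v}.Nonempty := by
      by_contra h
      rw [Set.not_nonempty_iff_eq_empty] at h
      rw [h, Set.ncard_empty] at hv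
      omega
    obtain ⟨i, hi⟩ := hne
    exact ⟨i, hi⟩

lemma spiesWin_scale {V : Type*} (G : SimpleGraph V) (r s k a : ℕ) (ha : 0 < a)
    (h : SpiesWin G r s k) : SpiesWin G (a * r) (a * s) (a * k) := by
  classical
  obtain ⟨f, hcaus, hplay⟩ := h
  have : Nonempty (Fin a) := ⟨⟨0, ha⟩⟩
  let e : Fin a × Fin r ≃ Fin (a * r) := finProdFinEquiv
  let es : Fin a × Fin s ≃ Fin (a * s) := finProdFinEquiv
  let Rt : (ℕ → Fin (a * r) → V) → Fin a → ℕ → Fin r → V :=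
    fun R t n i => R n (e (t, i))
  refine ⟨fun R n j => f (Rt R (es.symm j).1) n (es.symm j).2, ?_, ?_⟩
  · intro R R' n h
    funext j
    have : f (Rt R (es.symm j).1) n = f (Rt R' (es.symm j).1) n := by
      apply hcaus
      intro m hm
      funext i
      simp only [Rt, h m hm]
    exact congrFun this _
  · intro R hR
    have hRt : ∀ t, ∀ n, RSMove G (Rt R t n) (Rt R t (n + 1)) :=
      fun t n i => hR n (e (t, i))
    constructor
    · intro n j
      exact (hplay (Rt R (es.symm j).1) (hRt _)).1 n (es.symm j).2
    · intro n v hv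
      -- pigeonhole: some block t has at least k revolutionaries at v
      have hcard : a * k ≤ (Finset.univ.filter fun i : Fin (a * r) => R n i = v).card := by
        rwa [Set.ncard_eq_toFinset_card', Set.toFinset_setOf] at hv
      obtain ⟨t, -, ht⟩ := Finset.exists_le_card_fiber_of_mul_le_card_of_maps_to
        (f := fun i : Fin (a * r) => (e.symm i).1)
        (t := (Finset.univ : Finset (Fin a)))
        (fun _ _ => Finset.mem_univ _) Finset.univ_nonempty
        (by simpa using hcard)
      have hk' : k ≤ Set.ncard {i : Fin r | Rt R t n i = v} := by
        rw [Set.ncard_eq_toFinset_card']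
        refine le_trans ht ?_
        apply Finset.card_le_card_of_injOn (fun x => (e.symm x).2)
        · intro x hx
          simp only [Finset.mem_coe, Finset.mem_filter, Finset.mem_univ, true_and] at hx
          obtain ⟨hx1, hx2⟩ := hx
          simp only [Finset.mem_coe, Set.mem_toFinset, Set.mem_setOf_eq, Rt]
          have : (t, (e.symm x).2) = e.symm x := by
            rw [← hx2]
          rw [this, Equiv.apply_symm_apply]
          exact hx1
        · intro x hx y hy hxy
          simp only [Finset.mem_coe, Finset.mem_filter] at hx hy
          have : e.symm x = e.symm y := Prod.ext (hx.2.trans hy.2.symm) hxy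
          exact e.symm.injective this
      obtain ⟨j, hj⟩ := (hplay (Rt R t) (hRt t)).2 n v hk'
      refine ⟨es (t, j), ?_⟩
      simp only [Equiv.symm_apply_apply]
      exact hj

theorem stmt_8 {V : Type*} (G : SimpleGraph V) (r k a : ℕ) (hr : 0 < r) (hk : 0 < k)
    (ha : 0 < a) : spySigma G (a * r) (a * k) ≤ a * spySigma G r k := by
  have hne : {s | SpiesWin G r s k}.Nonempty := ⟨r, spiesWin_copy G r k hk⟩
  have hmem : SpiesWin G r (spySigma G r k) k := Nat.sInf_mem hne
  have : SpiesWin G (a * r) (a * spySigma G r k) (a * k) :=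
    spiesWin_scale G r _ k a ha hmem
  exact Nat.sInf_le this
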